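/- arXiv:1601.04737 — 2 statements merged into one kernel-verified Lean document; each statement's English description precedes it below -/
import Mathlib

section
/- Let β ∈ (0,1), 0 < ε < 1, 0 ≤ θ₁ < 1, 0 ≤ θ₂ < 1 and x ∈ ℝ^p. Suppose the sub-sampled Hessian H(x) satisfies λ_min(H(x)) ≥ (1−ε)γ, and let p ∈ ℝ^p satisfy the inexactness conditions ‖H(x)p + ∇F(x)‖ ≤ θ₁‖∇F(x)‖ and pᵀ∇F(x) ≤ −(1−θ₂) pᵀH(x)p. Then: (a) every step size α with 0 < α ≤ 2(1−θ₂)(1−β)(1−ε)/κ satisfies the Armijo condition F(x+αp) ≤ F(x) + αβ pᵀ∇F(x); (b) if θ₁ ≤ √((1−ε)/(4κ̃)), then for any α satisfying the Armijo condition, F(x+αp) − F(x*) ≤ (1 − αβ/κ̃)(F(x) − F(x*)); (c) for general θ₁ < 1, for any α satisfying the Armijo condition, F(x+αp) − F(x*) ≤ (1 − 2(1−θ₂)(1−θ₁)²(1−ε) αβ/κ̃²)(F(x) − F(x*)). -/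
open scoped RealInnerProductSpace

/-- The Hessian of `F : ℝ^d → ℝ` at `x`, as a continuous linear map,
obtained as the (Fréchet) derivative of the gradient. -/
noncomputable def hess {d : ℕ} (F : EuclideanSpace ℝ (Fin d) → ℝ)
    (x : EuclideanSpace ℝ (Fin d)) :
    EuclideanSpace ℝ (Fin d) →L[ℝ] EuclideanSpace ℝ (Fin d) :=
  fderiv ℝ (gradient F) x

section aux

variable {d : ℕ}

lemma my_gradient_eq (F : EuclideanSpace ℝ (Fin d) → ℝ) :
    gradient F = (⇑(InnerProductSpace.toDual ℝ (EuclideanSpace ℝ (Fin d))).symm) ∘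
      (fderiv ℝ F) := rfl

lemma my_gradient_inner (F : EuclideanSpace ℝ (Fin d) → ℝ) (y v : EuclideanSpace ℝ (Fin d)) :
    ⟪gradient F y, v⟫ = fderiv ℝ F y v := InnerProductSpace.toDual_symm_apply

lemma my_gradient_contDiff {F : EuclideanSpace ℝ (Fin d) → ℝ} (hF : ContDiff ℝ 2 F) :
    ContDiff ℝ 1 (gradient F) := by
  have h1 : ContDiff ℝ 1 (fderiv ℝ F) := hF.fderiv_right (by norm_num)
  rw [my_gradient_eq]
  exact (InnerProductSpace.toDual ℝ (EuclideanSpace ℝ (Fin d))).symm.contDiff.comp h1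

lemma hess_inner_eq {F : EuclideanSpace ℝ (Fin d) → ℝ} (x u w : EuclideanSpace ℝ (Fin d)) :
    ⟪hess F x u, w⟫ = fderiv ℝ (fderiv ℝ F) x u w := by
  rw [hess, my_gradient_eq,
    (InnerProductSpace.toDual ℝ (EuclideanSpace ℝ (Fin d))).symm.comp_fderiv]
  simp only [ContinuousLinearMap.comp_apply, LinearIsometryEquiv.coe_coe]
  exact InnerProductSpace.toDual_symm_apply

lemma hess_symm {F : EuclideanSpace ℝ (Fin d) → ℝ} (hF : ContDiff ℝ 2 F)
    (x u w : EuclideanSpace ℝ (Fin d)) :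
    ⟪hess F x u, w⟫ = ⟪hess F x w, u⟫ := by
  rw [hess_inner_eq, hess_inner_eq]
  exact hF.contDiffAt.isSymmSndFDerivAt (by simp) u w

lemma taylor_upper {F : EuclideanSpace ℝ (Fin d) → ℝ} (hF : ContDiff ℝ 2 F) {c : ℝ}
    (x v : EuclideanSpace ℝ (Fin d))
    (hc : ∀ y, ⟪hess F y v, v⟫ ≤ c * ‖v‖ ^ 2) :
    F (x + v) ≤ F x + ⟪gradient F x, v⟫ + c / 2 * ‖v‖ ^ 2 := by
  have hFd : Differentiable ℝ F := hF.differentiable (by norm_num)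
  have hGd : Differentiable ℝ (gradient F) := (my_gradient_contDiff hF).differentiable (by norm_num)
  have hline : ∀ t : ℝ, HasDerivAt (fun t : ℝ => x + t • v) v t := by
    intro t
    simpa using ((hasDerivAt_id t).smul_const v).const_add x
  have hφ : ∀ t : ℝ, HasDerivAt (fun t : ℝ => F (x + t • v))
      (⟪gradient F (x + t • v), v⟫) t := by
    intro t
    have h1 := (hFd (x + t • v)).hasFDerivAt.comp_hasDerivAt t (hline t)
    rw [my_gradient_inner]
    exact h1
  have hψ : ∀ t : ℝ, HasDerivAt (fun t : ℝ => ⟪gradient F (x + t • v), v⟫)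
      (⟪hess F (x + t • v) v, v⟫) t := by
    intro t
    have h1 : HasDerivAt (fun t : ℝ => gradient F (x + t • v))
        (hess F (x + t • v) v) t := by
      have h1' := (hGd (x + t • v)).hasFDerivAt.comp_hasDerivAt t (hline t)
      exact h1'
    have h2 := h1.inner ℝ (hasDerivAt_const t v)
    simp only [inner_zero_right, zero_add] at h2
    exact h2
  set h' : ℝ → ℝ := fun t => ⟪gradient F (x + t • v), v⟫ - ⟪gradient F x, v⟫ - c * t * ‖v‖ ^ 2
    with hh'def
  have hh' : ∀ t : ℝ, HasDerivAt h' (⟪hess F (x + t • v) v, v⟫ - c * ‖v‖ ^ 2) t := by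
    intro t
    have h3 : HasDerivAt (fun t : ℝ => c * t * ‖v‖ ^ 2) (c * ‖v‖ ^ 2) t := by
      have := ((hasDerivAt_id t).const_mul c).mul_const (‖v‖ ^ 2)
      simpa using this
    exact ((hψ t).sub_const (⟪gradient F x, v⟫)).sub h3
  have h'anti : Antitone h' := by
    refine antitone_of_deriv_nonpos (fun t => (hh' t).differentiableAt) (fun t => ?_)
    rw [(hh' t).deriv]
    have := hc (x + t • v)
    linarith
  have h'zero : h' 0 = 0 := by simp [hh'def]
  set h : ℝ → ℝ := fun t => F (x + t • v) - F x - t * ⟪gradient F x, v⟫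
      - c / 2 * t ^ 2 * ‖v‖ ^ 2 with hhdef
  have hh : ∀ t : ℝ, HasDerivAt h (h' t) t := by
    intro t
    have h2 : HasDerivAt (fun t : ℝ => t * ⟪gradient F x, v⟫) (⟪gradient F x, v⟫) t := by
      simpa using (hasDerivAt_id t).mul_const (⟪gradient F x, v⟫)
    have h3 : HasDerivAt (fun t : ℝ => c / 2 * t ^ 2 * ‖v‖ ^ 2) (c * t * ‖v‖ ^ 2) t := by
      have := ((hasDerivAt_pow 2 t).const_mul (c / 2)).mul_const (‖v‖ ^ 2)
      exact this.congr_deriv (by push_cast; ring)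
    exact (((hφ t).sub_const (F x)).sub h2).sub h3
  have hanti : AntitoneOn h (Set.Ici (0 : ℝ)) := by
    refine antitoneOn_of_deriv_nonpos (convex_Ici 0)
      (fun t _ => ((hh t).differentiableAt).continuousAt.continuousWithinAt)
      (fun t _ => ((hh t).differentiableAt).differentiableWithinAt) (fun t ht => ?_)
    rw [(hh t).deriv]
    have ht' : (0 : ℝ) ≤ t := le_of_lt (by simpa using ht)
    have h5 := h'anti ht'
    rw [h'zero] at h5
    exact h5
  have h10 : h 1 ≤ h 0 := hanti (by simp) (by simp) zero_le_one
  have h00 : h 0 = 0 := by simp [hhdef]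
  rw [h00] at h10
  have h1e : h 1 = F (x + v) - F x - ⟪gradient F x, v⟫ - c / 2 * ‖v‖ ^ 2 := by
    simp [hhdef]
  rw [h1e] at h10
  linarith

lemma my_gradient_neg (F : EuclideanSpace ℝ (Fin d) → ℝ) (y : EuclideanSpace ℝ (Fin d)) :
    gradient (fun z => -F z) y = - gradient F y := by
  show (InnerProductSpace.toDual ℝ (EuclideanSpace ℝ (Fin d))).symm _ = _
  rw [fderiv_fun_neg, map_neg]
  rfl

lemma hess_neg (F : EuclideanSpace ℝ (Fin d) → ℝ) (y : EuclideanSpace ℝ (Fin d)) :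
    hess (fun z => -F z) y = - hess F y := by
  rw [hess, hess]
  have h1 : gradient (fun z => -F z) = fun z => - gradient F z :=
    funext (fun z => my_gradient_neg F z)
  rw [h1, fderiv_fun_neg]

lemma taylor_lower {F : EuclideanSpace ℝ (Fin d) → ℝ} (hF : ContDiff ℝ 2 F) {c : ℝ}
    (x v : EuclideanSpace ℝ (Fin d))
    (hc : ∀ y, c * ‖v‖ ^ 2 ≤ ⟪hess F y v, v⟫) :
    F x + ⟪gradient F x, v⟫ + c / 2 * ‖v‖ ^ 2 ≤ F (x + v) := by
  have key := taylor_upper (F := fun z => -F z) (c := -c) hF.neg x v ?_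
  · rw [my_gradient_neg F x] at key
    simp only [inner_neg_left] at key
    have he : (-c) / 2 * ‖v‖ ^ 2 = -(c / 2 * ‖v‖ ^ 2) := by ring
    rw [he] at key
    linarith
  · intro y
    rw [hess_neg F y]
    have h1 := hc y
    simp only [ContinuousLinearMap.neg_apply, inner_neg_left]
    linarith

lemma cross_sum_le {n : ℕ} (K : Fin n → ℝ) {A B : Finset (Fin n)} (h : A.card = B.card)
    (hc : ∀ a ∈ A, ∀ b ∈ B, K a ≤ K b) : ∑ i ∈ A, K i ≤ ∑ i ∈ B, K i := by
  rcases B.eq_empty_or_nonempty with hB | hB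
  · have hA : A = ∅ := Finset.card_eq_zero.mp (by rw [h, hB]; simp)
    simp [hA, hB]
  · obtain ⟨b₀, hb₀, hbmin⟩ := B.exists_min_image K hB
    calc ∑ i ∈ A, K i ≤ A.card • K b₀ :=
          Finset.sum_le_card_nsmul A K (K b₀) (fun a ha => hc a ha b₀ hb₀)
    _ = B.card • K b₀ := by rw [h]
    _ ≤ ∑ i ∈ B, K i := Finset.card_nsmul_le_sum B K (K b₀) (fun b hb => hbmin b hb)

lemma cs_aux {A C D : ℝ} (hA : 0 ≤ A) (hD : 0 ≤ D)
    (key : ∀ t : ℝ, 0 ≤ A + 2 * t * C + t ^ 2 * D) : C ^ 2 ≤ A * D := by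
  rcases eq_or_lt_of_le hD with h0 | h0
  · rcases eq_or_ne C 0 with hC | hC
    · rw [hC]
      simpa using mul_nonneg hA hD
    · exfalso
      have hk := key (-(A + C ^ 2) / (2 * C))
      rw [← h0] at hk
      have he : A + 2 * (-(A + C ^ 2) / (2 * C)) * C + (-(A + C ^ 2) / (2 * C)) ^ 2 * 0
          = -C ^ 2 := by
        field_simp
        ring
      rw [he] at hk
      have hC2 : 0 < C ^ 2 := by positivity
      linarith
  · have hk := key (-C / D)
    have he : A + 2 * (-C / D) * C + (-C / D) ^ 2 * D = A - C ^ 2 / D := by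
      field_simp
      ring
    rw [he] at hk
    have h7 : C ^ 2 / D ≤ A := by linarith
    rw [div_le_iff₀ h0] at h7
    linarith

lemma arith_R {c R t w : ℝ} (hc : 0 < c) (h1 : c * w ^ 2 ≤ R) (h3 : R ≤ t * w) :
    c * R ≤ t ^ 2 := by
  nlinarith [sq_nonneg (c * w - t), h1, h3, hc]

lemma arith_GA {G A k : ℝ} (hG : 0 ≤ G) (hA : 0 ≤ A) (hk : 0 < k)
    (h : G ^ 2 ≤ A * (k * G)) : G ≤ k * A := by
  rcases eq_or_lt_of_le hG with h0 | h0
  · rw [← h0]; positivity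
  · nlinarith [h, h0]

lemma arith_b {k G A R Cc : ℝ} (hk : 0 < k) (hA0 : 0 ≤ A) (hR0 : 0 ≤ R) (hG0 : 0 ≤ G)
    (hGA : G ≤ k * A) (hR4 : 4 * k * R ≤ G) (hC2 : Cc ^ 2 ≤ R * A) :
    G ≤ 2 * k * (A - Cc) := by
  have hkA : 0 ≤ k * A := by positivity
  have h61 : (2 * k * Cc) ^ 2 ≤ 4 * k ^ 2 * (R * A) := by
    linarith [mul_le_mul_of_nonneg_left hC2 (by positivity : (0:ℝ) ≤ 4 * k ^ 2)]
  have h62 : 4 * k ^ 2 * (R * A) ≤ k * G * A := by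
    linarith [mul_le_mul_of_nonneg_right hR4 hkA]
  have h63 : k * G * A ≤ (2 * k * A - G) ^ 2 := by
    have h1 : 0 ≤ k * A - G := by linarith
    have h2 : 0 ≤ 4 * (k * A) - G := by linarith
    linarith [mul_nonneg h1 h2]
  have h64 : 0 ≤ 2 * k * A - G := by linarith
  nlinarith [h61, h62, h63, h64]

lemma arith_a {α β θ₂ ε γ Kc pg np Fxp Fx : ℝ} (hα : 0 < α) (hβ1 : β < 1)
    (hnp : 0 ≤ np)
    (hgp : pg ≤ -((1 - θ₂) * ((1 - ε) * γ) * np))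
    (hαK : α * Kc ≤ 2 * (1 - θ₂) * (1 - β) * (1 - ε) * γ)
    (hT : Fxp ≤ Fx + α * pg + Kc / 2 * (α ^ 2 * np)) :
    Fxp ≤ Fx + α * β * pg := by
  have e1 : α * (1 - β) * ((1 - θ₂) * ((1 - ε) * γ) * np) ≤ α * (1 - β) * (-pg) :=
    mul_le_mul_of_nonneg_left (by linarith) (mul_nonneg hα.le (by linarith))
  have h1 : α * (α * Kc) ≤ α * (2 * (1 - θ₂) * (1 - β) * (1 - ε) * γ) :=
    mul_le_mul_of_nonneg_left hαK hα.le
  have e2 : Kc / 2 * (α ^ 2 * np) ≤ α * (1 - β) * ((1 - θ₂) * ((1 - ε) * γ) * np) := by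
    linarith [mul_le_mul_of_nonneg_right h1 hnp]
  linarith [e1, e2, hT]

lemma arith_c {k ε γ θ₁ θ₂ ng np Hpp nHp pg Δ : ℝ}
    (hk : 0 < k) (hγ : 0 < γ) (hε1 : ε < 1) (hθ₁1 : θ₁ < 1) (hθ₁0 : 0 ≤ θ₁)
    (hθ₂1 : θ₂ < 1) (hθ₂0 : 0 ≤ θ₂)
    (hng : 0 ≤ ng) (hnp : 0 ≤ np) (hnHp : 0 ≤ nHp) (hΔ : 0 ≤ Δ)
    (hlowg : (1 - θ₁) * ng ≤ nHp)
    (hsq : nHp ^ 2 ≤ k * Hpp)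
    (hup : Hpp ≤ k * np)
    (hpg : pg ≤ -((1 - θ₂) * ((1 - ε) * γ) * np))
    (hPL : 2 * γ * Δ ≤ ng ^ 2) :
    2 * (1 - θ₂) * (1 - θ₁) ^ 2 * (1 - ε) * γ ^ 2 * Δ ≤ k ^ 2 * (-pg) := by
  have hc0 : (0:ℝ) ≤ (1 - θ₂) * ((1 - ε) * γ) :=
    mul_nonneg (by linarith) (mul_nonneg (by linarith) hγ.le)
  have he : ((1 - θ₁) * ng) ^ 2 ≤ nHp ^ 2 :=
    pow_le_pow_left₀ (mul_nonneg (by linarith) hng) hlowg 2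
  have hKp : (1 - θ₁) ^ 2 * ng ^ 2 ≤ k * Hpp := by linarith [he, hsq]
  have hpn : (1 - θ₁) ^ 2 * ng ^ 2 ≤ k ^ 2 * np := by
    linarith [mul_le_mul_of_nonneg_left hup hk.le, hKp]
  have h1 : (1 - θ₂) * ((1 - ε) * γ) * np ≤ -pg := by linarith
  have h2 : (1 - θ₂) * ((1 - ε) * γ) * ((1 - θ₁) ^ 2 * ng ^ 2)
      ≤ (1 - θ₂) * ((1 - ε) * γ) * (k ^ 2 * np) := mul_le_mul_of_nonneg_left hpn hc0
  have h3 : (1 - θ₂) * ((1 - ε) * γ) * (k ^ 2 * np) ≤ k ^ 2 * (-pg) := by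
    linarith [mul_le_mul_of_nonneg_left h1 (sq_nonneg k)]
  have h4 : (1 - θ₂) * ((1 - ε) * γ) * ((1 - θ₁) ^ 2 * (2 * γ * Δ))
      ≤ (1 - θ₂) * ((1 - ε) * γ) * ((1 - θ₁) ^ 2 * ng ^ 2) :=
    mul_le_mul_of_nonneg_left (mul_le_mul_of_nonneg_left hPL (sq_nonneg _)) hc0
  linarith [h2, h3, h4]

lemma arith_PL {γ ip t G Fx Fs : ℝ} (hγ : 0 < γ) (hG : 0 ≤ G)
    (h1 : Fx + ip + γ / 2 * t ^ 2 ≤ Fs) (h4 : -(G * t) ≤ ip) :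
    2 * γ * (Fx - Fs) ≤ G ^ 2 := by
  nlinarith [sq_nonneg (γ * t - G), hγ, sq_nonneg t]

lemma arith_gp {θ₂ c np pg Hpp : ℝ} (hθ₂1 : θ₂ < 1) (hc0 : 0 ≤ c)
    (hnp : 0 ≤ np) (hlow : c * np ≤ Hpp) (hp2 : pg ≤ -(1 - θ₂) * Hpp) :
    pg ≤ -((1 - θ₂) * c * np) := by
  have h : (1 - θ₂) * (c * np) ≤ (1 - θ₂) * Hpp :=
    mul_le_mul_of_nonneg_left hlow (by linarith)
  nlinarith [h, hp2]

end aux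

set_option maxHeartbeats 2000000 in
theorem stmt_3 {d n s : ℕ} (hn : 0 < n) (hs : 0 < s)
    (f : Fin n → EuclideanSpace ℝ (Fin d) → ℝ) (K : Fin n → ℝ)
    (F : EuclideanSpace ℝ (Fin d) → ℝ)
    (γ Kc β ε θ₁ θ₂ Khat : ℝ) (x xstar p : EuclideanSpace ℝ (Fin d))
    (S : Fin s → Fin n)
    -- each fᵢ is twice continuously differentiable, convex, with `∇²fᵢ ⪯ Kᵢ I`
    (hf : ∀ i, ContDiff ℝ 2 (f i))
    (hKpos : ∀ i, 0 < K i)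
    (hfpsd : ∀ i y v, 0 ≤ ⟪(hess (f i) y) v, v⟫)
    (hfK : ∀ i y v, ⟪(hess (f i) y) v, v⟫ ≤ K i * ‖v‖ ^ 2)
    -- `F = (1/n) ∑ fᵢ`
    (hF : ∀ y, F y = (1 / n : ℝ) * ∑ i, f i y)
    -- `γ I ⪯ ∇²F ⪯ K I` with `0 < γ ≤ K`
    (hγ : 0 < γ) (hγK : γ ≤ Kc)
    (hFlow : ∀ y v, γ * ‖v‖ ^ 2 ≤ ⟪(hess F y) v, v⟫)
    (hFup : ∀ y v, ⟪(hess F y) v, v⟫ ≤ Kc * ‖v‖ ^ 2)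
    -- `xstar` is the (unique) minimizer of `F`
    (hmin : ∀ y, F xstar ≤ F y)
    (hβ : 0 < β) (hβ1 : β < 1) (hε : 0 < ε) (hε1 : ε < 1)
    (hθ₁0 : 0 ≤ θ₁) (hθ₁1 : θ₁ < 1) (hθ₂0 : 0 ≤ θ₂) (hθ₂1 : θ₂ < 1)
    -- `Khat = K̂_{|S|}` if the sample is without replacement (distinct indices),
    -- `Khat = K̂₁ = max Kᵢ` otherwise
    (hKhat :
      (Function.Injective S ∧ ∃ Q : Finset (Fin n), Q.card = s ∧
          (∀ i ∈ Q, ∀ j ∉ Q, K j ≤ K i) ∧ Khat = (∑ i ∈ Q, K i) / s) ∨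
      (¬ Function.Injective S ∧ (∀ i, K i ≤ Khat) ∧ ∃ i, Khat = K i))
    -- `λ_min(H(x)) ≥ (1-ε)γ` for the sub-sampled Hessian `H(x)`
    (hH : ∀ v, (1 - ε) * γ * ‖v‖ ^ 2 ≤
        ⟪((s : ℝ)⁻¹ • ∑ j, hess (f (S j)) x) v, v⟫)
    -- inexactness conditions on the update direction `p`
    (hp₁ : ‖((s : ℝ)⁻¹ • ∑ j, hess (f (S j)) x) p + gradient F x‖ ≤ θ₁ * ‖gradient F x‖)
    (hp₂ : ⟪p, gradient F x⟫ ≤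
        -(1 - θ₂) * ⟪p, ((s : ℝ)⁻¹ • ∑ j, hess (f (S j)) x) p⟫) :
    -- (a) any `0 < α ≤ 2(1-θ₂)(1-β)(1-ε)/κ` satisfies the Armijo condition
    (∀ α : ℝ, 0 < α → α ≤ 2 * (1 - θ₂) * (1 - β) * (1 - ε) / (Kc / γ) →
        F (x + α • p) ≤ F x + α * β * ⟪p, gradient F x⟫) ∧
    -- (b) if `θ₁ ≤ √((1-ε)/(4 κ̃))`, linear decrease with rate `1 - αβ/κ̃`
    (θ₁ ≤ Real.sqrt ((1 - ε) / (4 * (Khat / γ))) →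
      ∀ α : ℝ, 0 < α → F (x + α • p) ≤ F x + α * β * ⟪p, gradient F x⟫ →
        F (x + α • p) - F xstar ≤ (1 - α * β / (Khat / γ)) * (F x - F xstar)) ∧
    -- (c) in general, linear decrease with rate `1 - 2(1-θ₂)(1-θ₁)²(1-ε)αβ/κ̃²`
    (∀ α : ℝ, 0 < α → F (x + α • p) ≤ F x + α * β * ⟪p, gradient F x⟫ →
        F (x + α • p) - F xstar ≤
          (1 - 2 * (1 - θ₂) * (1 - θ₁) ^ 2 * (1 - ε) * α * β / (Khat / γ) ^ 2) *
            (F x - F xstar)) := by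
  set H : EuclideanSpace ℝ (Fin d) →L[ℝ] EuclideanSpace ℝ (Fin d) :=
    (s : ℝ)⁻¹ • ∑ j, hess (f (S j)) x with hHdef
  set g : EuclideanSpace ℝ (Fin d) := gradient F x with hgdef
  have hHval : H = (s : ℝ)⁻¹ • ∑ j, hess (f (S j)) x := hHdef
  clear_value H
  clear_value g
  have hscast : (0 : ℝ) < s := by exact_mod_cast hs
  have hKc : 0 < Kc := lt_of_lt_of_le hγ hγK
  have hεγ : 0 < (1 - ε) * γ := mul_pos (by linarith) hγ
  -- F is C²
  have hFC : ContDiff ℝ 2 F := by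
    have hFe : F = fun y => (1 / n : ℝ) * ∑ i, f i y := funext hF
    rw [hFe]
    exact contDiff_const.mul (ContDiff.sum (fun i _ => hf i))
  -- basic facts about H
  have hHapply : ∀ v w : EuclideanSpace ℝ (Fin d),
      ⟪H v, w⟫ = (s : ℝ)⁻¹ * ∑ j, ⟪hess (f (S j)) x v, w⟫ := by
    intro v w
    rw [hHval]
    simp only [ContinuousLinearMap.smul_apply, ContinuousLinearMap.sum_apply,
      real_inner_smul_left, sum_inner]
  have hHsym : ∀ v w, ⟪H v, w⟫ = ⟪H w, v⟫ := by
    intro v w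
    rw [hHapply, hHapply]
    congr 1
    exact Finset.sum_congr rfl (fun j _ => hess_symm (hf (S j)) x v w)
  have hHpsd : ∀ v, 0 ≤ ⟪H v, v⟫ := by
    intro v
    refine le_trans ?_ (hH v)
    have h1 : (0:ℝ) ≤ 1 - ε := by linarith
    positivity
  have hKhatpos : 0 < Khat := by
    rcases hKhat with ⟨_, Q, hQcard, _, hKe⟩ | ⟨_, _, i, hKe⟩
    · rw [hKe]
      have hQne : Q.Nonempty := Finset.card_pos.mp (by omega)
      exact div_pos (Finset.sum_pos (fun i _ => hKpos i) hQne) hscast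
    · rw [hKe]; exact hKpos i
  have hsumK : (∑ j : Fin s, K (S j)) ≤ s * Khat := by
    rcases hKhat with ⟨hinjS, Q, hQcard, hQdom, hKe⟩ | ⟨_, hup, _⟩
    · have him : ∑ j : Fin s, K (S j) = ∑ i ∈ Finset.univ.image S, K i :=
        (Finset.sum_image (fun a _ b _ hab => hinjS hab)).symm
      set T := Finset.univ.image S with hTdef
      have hTcard : T.card = s := by
        rw [hTdef, Finset.card_image_of_injective _ hinjS, Finset.card_univ, Fintype.card_fin]
      have hsplitT : ∑ i ∈ T \ (T ∩ Q), K i + ∑ i ∈ T ∩ Q, K i = ∑ i ∈ T, K i :=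
        Finset.sum_sdiff Finset.inter_subset_left
      have hsplitQ : ∑ i ∈ Q \ (Q ∩ T), K i + ∑ i ∈ Q ∩ T, K i = ∑ i ∈ Q, K i :=
        Finset.sum_sdiff Finset.inter_subset_left
      rw [Finset.sdiff_inter_self_left] at hsplitT hsplitQ
      rw [Finset.inter_comm Q T] at hsplitQ
      have hcards : (T \ Q).card = (Q \ T).card := by
        have h1 := Finset.card_inter_add_card_sdiff T Q
        have h2 := Finset.card_inter_add_card_sdiff Q T
        rw [Finset.inter_comm Q T] at h2
        omega
      have hcross : ∑ i ∈ T \ Q, K i ≤ ∑ i ∈ Q \ T, K i := by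
        refine cross_sum_le K hcards (fun a ha b hb => ?_)
        exact hQdom b (Finset.mem_sdiff.mp hb).1 a (Finset.mem_sdiff.mp ha).2
      have hTQ : ∑ i ∈ T, K i ≤ ∑ i ∈ Q, K i := by linarith
      have hKe' : s * Khat = ∑ i ∈ Q, K i := by
        rw [hKe]; field_simp
      rw [him, hKe']
      exact hTQ
    · calc (∑ j : Fin s, K (S j)) ≤ ∑ _j : Fin s, Khat :=
            Finset.sum_le_sum (fun j _ => hup (S j))
      _ = s * Khat := by simp [Finset.sum_const, Finset.card_univ, nsmul_eq_mul]
  have hHup : ∀ v, ⟪H v, v⟫ ≤ Khat * ‖v‖ ^ 2 := by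
    intro v
    rw [hHapply]
    have h1 : ∑ j, ⟪hess (f (S j)) x v, v⟫ ≤ ∑ j : Fin s, K (S j) * ‖v‖ ^ 2 :=
      Finset.sum_le_sum (fun j _ => hfK (S j) x v)
    have h2 : ∑ j : Fin s, K (S j) * ‖v‖ ^ 2 = (∑ j : Fin s, K (S j)) * ‖v‖ ^ 2 :=
      (Finset.sum_mul _ _ _).symm
    have h3 : (∑ j : Fin s, K (S j)) * ‖v‖ ^ 2 ≤ s * Khat * ‖v‖ ^ 2 :=
      mul_le_mul_of_nonneg_right hsumK (sq_nonneg _)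
    have h4 : (s : ℝ)⁻¹ * ∑ j, ⟪hess (f (S j)) x v, v⟫ ≤ (s : ℝ)⁻¹ * (s * Khat * ‖v‖ ^ 2) := by
      apply mul_le_mul_of_nonneg_left _ (by positivity)
      linarith
    have h5 : (s : ℝ)⁻¹ * (s * Khat * ‖v‖ ^ 2) = Khat * ‖v‖ ^ 2 := by
      field_simp
    linarith
  -- Cauchy–Schwarz for the quadratic form of H
  have hCS : ∀ u w, ⟪H u, w⟫ ^ 2 ≤ ⟪H u, u⟫ * ⟪H w, w⟫ := by
    intro u w
    have key : ∀ t : ℝ, 0 ≤ ⟪H u, u⟫ + 2 * t * ⟪H u, w⟫ + t ^ 2 * ⟪H w, w⟫ := by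
      intro t
      have h0 := hHpsd (u + t • w)
      have hexp : ⟪H (u + t • w), u + t • w⟫
          = ⟪H u, u⟫ + 2 * t * ⟪H u, w⟫ + t ^ 2 * ⟪H w, w⟫ := by
        rw [map_add, map_smul]
        simp only [inner_add_left, inner_add_right, real_inner_smul_left, real_inner_smul_right]
        rw [hHsym w u]
        ring
      rw [hexp] at h0
      exact h0
    exact cs_aux (hHpsd u) (hHpsd w) key
  -- injectivity and surjectivity of H
  have hHinj : Function.Injective ⇑H := by
    intro u w huw
    have h0 := hH (u - w)
    rw [map_sub, huw, sub_self] at h0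
    rw [inner_zero_left] at h0
    have h2 : (1 - ε) * γ * ‖u - w‖ ^ 2 ≤ (1 - ε) * γ * 0 := by rw [mul_zero]; exact h0
    have h3 : ‖u - w‖ ^ 2 ≤ 0 := le_of_mul_le_mul_left h2 hεγ
    have h4 : ‖u - w‖ ^ 2 = 0 := le_antisymm h3 (sq_nonneg _)
    have h5 : ‖u - w‖ = 0 := (pow_eq_zero_iff two_ne_zero).mp h4
    have h6 : u - w = 0 := norm_eq_zero.mp h5
    exact sub_eq_zero.mp h6
  have hHsurj : Function.Surjective ⇑H := by
    have h2 : Function.Injective H.toLinearMap := hHinj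
    have := LinearMap.injective_iff_surjective.mp h2
    exact this
  -- PL-type inequality at x
  have hPL : 2 * γ * (F x - F xstar) ≤ ‖g‖ ^ 2 := by
    have h1 := taylor_lower hFC x (xstar - x) (fun y => hFlow y (xstar - x))
    have h2 : x + (xstar - x) = xstar := by abel
    rw [h2] at h1
    rw [← hgdef] at h1
    have h3 : |⟪g, xstar - x⟫| ≤ ‖g‖ * ‖xstar - x‖ := abs_real_inner_le_norm g (xstar - x)
    have h4 : -(‖g‖ * ‖xstar - x‖) ≤ ⟪g, xstar - x⟫ := neg_le_of_abs_le h3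
    exact arith_PL hγ (norm_nonneg g) (by linarith [h1, hmin x]) h4
  -- direction quality from hp₂
  have hp₂' : ⟪p, g⟫ ≤ -(1 - θ₂) * ⟪H p, p⟫ := by
    rw [real_inner_comm p (H p)]
    exact hp₂
  have hHpp_low : (1 - ε) * γ * ‖p‖ ^ 2 ≤ ⟪H p, p⟫ := hH p
  have hgp_neg : ⟪p, g⟫ ≤ -((1 - θ₂) * ((1 - ε) * γ) * ‖p‖ ^ 2) :=
    arith_gp hθ₂1 hεγ.le (sq_nonneg _) hHpp_low hp₂'
  have hFxs : 0 ≤ F x - F xstar := by linarith [hmin x]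
  refine ⟨?_, ?_, ?_⟩
  · -- part (a)
    intro α hα hα2
    have hT := taylor_upper hFC x (α • p) (fun y => hFup y (α • p))
    rw [← hgdef] at hT
    have hin : ⟪g, α • p⟫ = α * ⟪p, g⟫ := by
      rw [real_inner_smul_right, real_inner_comm]
    have hns : ‖α • p‖ ^ 2 = α ^ 2 * ‖p‖ ^ 2 := by
      rw [norm_smul]
      simp [mul_pow, sq_abs]
    rw [hin, hns] at hT
    have hαK : α * Kc ≤ 2 * (1 - θ₂) * (1 - β) * (1 - ε) * γ := by
      have he : 2 * (1 - θ₂) * (1 - β) * (1 - ε) / (Kc / γ)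
          = 2 * (1 - θ₂) * (1 - β) * (1 - ε) * γ / Kc := by
        rw [div_div_eq_mul_div]
      rw [he] at hα2
      exact (le_div_iff₀ hKc).mp hα2
    exact arith_a hα hβ1 (sq_nonneg ‖p‖) hgp_neg hαK hT
  · -- part (b)
    intro hθb α hα hArm
    -- θ₁² ≤ (1-ε)γ/(4 Khat)
    have hX : (0:ℝ) ≤ (1 - ε) / (4 * (Khat / γ)) := by
      have h1 : (0:ℝ) < Khat / γ := div_pos hKhatpos hγ
      have h2 : (0:ℝ) ≤ 1 - ε := by linarith
      positivity
    have hθsq : θ₁ ^ 2 ≤ (1 - ε) / (4 * (Khat / γ)) := by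
      have h2 := pow_le_pow_left₀ hθ₁0 hθb 2
      rwa [Real.sq_sqrt hX] at h2
    have hθsq' : 4 * Khat * θ₁ ^ 2 ≤ (1 - ε) * γ := by
      have h1 : (1 - ε) / (4 * (Khat / γ)) = (1 - ε) * γ / (4 * Khat) := by
        rw [show (4:ℝ) * (Khat / γ) = 4 * Khat / γ from by ring, div_div_eq_mul_div]
      rw [h1] at hθsq
      have h2 : (0:ℝ) < 4 * Khat := by linarith
      calc 4 * Khat * θ₁ ^ 2 ≤ 4 * Khat * ((1 - ε) * γ / (4 * Khat)) :=
            mul_le_mul_of_nonneg_left hθsq (by linarith)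
      _ = (1 - ε) * γ := by field_simp
    obtain ⟨wg, hwg⟩ := hHsurj g
    obtain ⟨wr, hwr⟩ := hHsurj (H p + g)
    have hpwrg : p = wr - wg := by
      apply hHinj
      rw [map_sub, hwr, hwg]
      abel
    obtain ⟨A, hAdef⟩ : ∃ t : ℝ, t = ⟪H wg, wg⟫ := ⟨_, rfl⟩
    obtain ⟨R, hRdef⟩ : ∃ t : ℝ, t = ⟪H wr, wr⟫ := ⟨_, rfl⟩
    obtain ⟨Cc, hCdef⟩ : ∃ t : ℝ, t = ⟪H wr, wg⟫ := ⟨_, rfl⟩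
    have hA0 : 0 ≤ A := hAdef ▸ hHpsd wg
    have hR0 : 0 ≤ R := hRdef ▸ hHpsd wr
    -- ‖g‖² ≤ Khat * A
    have hGA : ‖g‖ ^ 2 ≤ Khat * A := by
      have h1 := hCS wg g
      have h2 : ⟪H wg, g⟫ = ‖g‖ ^ 2 := by
        rw [hwg, real_inner_self_eq_norm_sq]
      have h3 : ⟪H g, g⟫ ≤ Khat * ‖g‖ ^ 2 := hHup g
      rw [h2] at h1
      refine arith_GA (sq_nonneg _) hA0 hKhatpos ?_
      calc (‖g‖ ^ 2) ^ 2 ≤ A * ⟪H g, g⟫ := hAdef ▸ h1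
      _ ≤ A * (Khat * ‖g‖ ^ 2) := mul_le_mul_of_nonneg_left h3 hA0
    -- R ≤ θ₁²‖g‖²/((1-ε)γ), as (1-ε)γ R ≤ θ₁² ‖g‖²
    have hrn : ‖H wr‖ ≤ θ₁ * ‖g‖ := by
      rw [hwr]
      exact hp₁
    have hRb : (1 - ε) * γ * R ≤ (θ₁ * ‖g‖) ^ 2 := by
      have h1 : (1 - ε) * γ * ‖wr‖ ^ 2 ≤ R := hRdef ▸ hH wr
      have h2 : R ≤ ‖H wr‖ * ‖wr‖ := hRdef ▸ real_inner_le_norm _ _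
      have h3 : R ≤ θ₁ * ‖g‖ * ‖wr‖ :=
        h2.trans (mul_le_mul_of_nonneg_right hrn (norm_nonneg wr))
      exact arith_R hεγ h1 h3
    have hR4 : 4 * Khat * R ≤ ‖g‖ ^ 2 := by
      have h1 : 4 * Khat * ((1 - ε) * γ * R) ≤ 4 * Khat * ((θ₁ * ‖g‖) ^ 2) :=
        mul_le_mul_of_nonneg_left hRb (by linarith)
      have h2 : 4 * Khat * θ₁ ^ 2 * ‖g‖ ^ 2 ≤ (1 - ε) * γ * ‖g‖ ^ 2 :=
        mul_le_mul_of_nonneg_right hθsq' (sq_nonneg _)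
      have h3 : (1 - ε) * γ * (4 * Khat * R) ≤ (1 - ε) * γ * ‖g‖ ^ 2 := by linarith [h1, h2]
      exact le_of_mul_le_mul_left h3 hεγ
    have hC2 : Cc ^ 2 ≤ R * A := by rw [hAdef, hRdef, hCdef]; exact hCS wr wg
    -- ⟪p, g⟫ = Cc - A
    have hpg_eq : ⟪p, g⟫ = Cc - A := by
      rw [hpwrg, inner_sub_left]
      have h1 : ⟪wr, g⟫ = Cc := by
        rw [← hwg, real_inner_comm, hHsym wg wr, ← hCdef]
      have h2 : ⟪wg, g⟫ = A := by
        rw [← hwg, real_inner_comm, ← hAdef]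
      rw [h1, h2]
    have key_b : ‖g‖ ^ 2 ≤ 2 * Khat * (A - Cc) :=
      arith_b hKhatpos hA0 hR0 (sq_nonneg _) hGA hR4 hC2
    -- conclude
    have hcore : γ * (F x - F xstar) ≤ Khat * (-(⟪p, g⟫)) := by
      rw [hpg_eq]
      linarith [hPL, key_b]
    have hdiv : γ * (F x - F xstar) / Khat ≤ -(⟪p, g⟫) := by
      rw [div_le_iff₀ hKhatpos]
      linarith [hcore]
    have hmul : α * β * (γ * (F x - F xstar) / Khat) ≤ α * β * (-(⟪p, g⟫)) :=
      mul_le_mul_of_nonneg_left hdiv (by positivity)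
    have hrate : α * β / (Khat / γ) * (F x - F xstar) = α * β * (γ * (F x - F xstar) / Khat) := by
      field_simp
    have hgoal : (1 - α * β / (Khat / γ)) * (F x - F xstar)
        = (F x - F xstar) - α * β / (Khat / γ) * (F x - F xstar) := by ring
    rw [hgoal, hrate]
    linarith [hArm, hmul]
  · -- part (c)
    intro α hα hArm
    have hHp_low : (1 - θ₁) * ‖g‖ ≤ ‖H p‖ := by
      have h1 : ‖g‖ ≤ ‖H p + g‖ + ‖H p‖ := by
        have h2 : g = (H p + g) - H p := by abel
        calc ‖g‖ = ‖(H p + g) - H p‖ := by rw [← h2]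
        _ ≤ ‖H p + g‖ + ‖H p‖ := norm_sub_le _ _
      have h3 : ‖H p + g‖ ≤ θ₁ * ‖g‖ := hp₁
      nlinarith [h1, h3]
    have hHp_sq : ‖H p‖ ^ 2 ≤ Khat * ⟪H p, p⟫ := by
      have h1 := hCS p (H p)
      have h2 : ⟪H (H p), H p⟫ ≤ Khat * ‖H p‖ ^ 2 := hHup (H p)
      have h3 : ⟪H p, H p⟫ = ‖H p‖ ^ 2 := real_inner_self_eq_norm_sq _
      rw [h3] at h1
      refine arith_GA (sq_nonneg _) (hHpsd p) hKhatpos ?_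
      calc (‖H p‖ ^ 2) ^ 2 ≤ ⟪H p, p⟫ * ⟪H (H p), H p⟫ := h1
      _ ≤ ⟪H p, p⟫ * (Khat * ‖H p‖ ^ 2) := mul_le_mul_of_nonneg_left h2 (hHpsd p)
    have hcore : 2 * (1 - θ₂) * (1 - θ₁) ^ 2 * (1 - ε) * γ ^ 2 * (F x - F xstar)
        ≤ Khat ^ 2 * (-(⟪p, g⟫)) :=
      arith_c hKhatpos hγ hε1 hθ₁1 hθ₁0 hθ₂1 hθ₂0 (norm_nonneg g) (sq_nonneg ‖p‖)
        (norm_nonneg (H p)) hFxs hHp_low hHp_sq (hHup p) hgp_neg hPL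
    have hK2 : (0:ℝ) < Khat ^ 2 := by positivity
    have hdiv : 2 * (1 - θ₂) * (1 - θ₁) ^ 2 * (1 - ε) * γ ^ 2 * (F x - F xstar) / Khat ^ 2
        ≤ -(⟪p, g⟫) := by
      rw [div_le_iff₀ hK2]
      linarith [hcore]
    have hmul : α * β * (2 * (1 - θ₂) * (1 - θ₁) ^ 2 * (1 - ε) * γ ^ 2 * (F x - F xstar) / Khat ^ 2)
        ≤ α * β * (-(⟪p, g⟫)) :=
      mul_le_mul_of_nonneg_left hdiv (by positivity)
    have hrate : 2 * (1 - θ₂) * (1 - θ₁) ^ 2 * (1 - ε) * α * β / (Khat / γ) ^ 2 * (F x - F xstar)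
        = α * β * (2 * (1 - θ₂) * (1 - θ₁) ^ 2 * (1 - ε) * γ ^ 2 * (F x - F xstar) / Khat ^ 2) := by
      field_simp
    have hgoal : (1 - 2 * (1 - θ₂) * (1 - θ₁) ^ 2 * (1 - ε) * α * β / (Khat / γ) ^ 2) *
          (F x - F xstar)
        = (F x - F xstar) - 2 * (1 - θ₂) * (1 - θ₁) ^ 2 * (1 - ε) * α * β / (Khat / γ) ^ 2 *
          (F x - F xstar) := by ring
    rw [hgoal, hrate]
    linarith [hArm, hmul]
end

section
/- Assume additionally γ·I ⪯ ∇²F(x) for all x with 0 < γ ≤ K, let 0 < ε < 1, β ∈ (0,1), 0 < θ₂ < 1, λ ≥ 0, and let S be a sample of distinct indices of size s whose sub-sampled Hessian H = H(x) satisfies λ_min(H) ≥ (1−ε)γ. Let Ĥ = H + λ·I, suppose 0 ≤ θ₁ ≤ (1/2)√( ((1−ε)γ + λ)/(K̂_s + λ) ), and let p ∈ ℝ^p satisfy ‖Ĥp + ∇F(x)‖ ≤ θ₁‖∇F(x)‖ and pᵀ∇F(x) ≤ −(1−θ₂) pᵀĤp. Then for any α satisfying the Armijo condition F(x+αp) ≤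 F(x) + αβ pᵀ∇F(x), one has F(x+αp) − F(x*) ≤ (1 − αβγ/(K̂_s + λ))(F(x) − F(x*)), and every step size α with 0 < α ≤ 2(1−θ₂)(1−β)((1−ε)γ + λ)/K satisfies the Armijo condition. -/
open scoped RealInnerProductSpace

/-- The ridge-regularized sub-sampled Hessian `Ĥ(x) = H(x) + λ I`, where
`H(x) = (1/s) ∑_{j∈S} ∇²f_{S j}(x)`. -/
noncomputable def ridgeHess {d n s : ℕ} (f : Fin n → EuclideanSpace ℝ (Fin d) → ℝ)
    (S : Fin s → Fin n) (lam : ℝ) (x : EuclideanSpace ℝ (Fin d)) :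
    EuclideanSpace ℝ (Fin d) →L[ℝ] EuclideanSpace ℝ (Fin d) :=
  ((s : ℝ)⁻¹ • ∑ j, hess (f (S j)) x) +
    lam • ContinuousLinearMap.id ℝ (EuclideanSpace ℝ (Fin d))

set_option maxHeartbeats 1000000

section Aux

variable {d : ℕ}

local notation "E" => EuclideanSpace ℝ (Fin d)

noncomputable def rieszCLM (d : ℕ) : (E →L[ℝ] ℝ) →L[ℝ] E :=
  LinearMap.toContinuousLinearMap
  { toFun := fun L => (InnerProductSpace.toDual ℝ E).symm L
    map_add' := fun a b => map_add _ a b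
    map_smul' := fun c L => by
      have := (InnerProductSpace.toDual ℝ E).symm.map_smulₛₗ c L
      simpa using this }

lemma inner_rieszCLM (L : E →L[ℝ] ℝ) (v : E) : ⟪rieszCLM d L, v⟫ = L v :=
  InnerProductSpace.toDual_symm_apply

lemma grad_eq_riesz (φ : E → ℝ) : gradient φ = fun z => rieszCLM d (fderiv ℝ φ z) := rfl

lemma grad_inner (φ : E → ℝ) (y v : E) : ⟪gradient φ y, v⟫ = fderiv ℝ φ y v :=
  InnerProductSpace.toDual_symm_apply

lemma hasFDerivAt_grad {φ : E → ℝ} (hφ : ContDiff ℝ 2 φ) (y : E) :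
    HasFDerivAt (gradient φ) (hess φ y) y ∧
      hess φ y = (rieszCLM d).comp (fderiv ℝ (fderiv ℝ φ) y) := by
  have h2 : HasFDerivAt (fderiv ℝ φ) (fderiv ℝ (fderiv ℝ φ) y) y :=
    (((hφ.fderiv_right (m := 1) (by norm_num)).differentiable (by norm_num)) y).hasFDerivAt
  have hc : HasFDerivAt (fun z => rieszCLM d (fderiv ℝ φ z))
      ((rieszCLM d).comp (fderiv ℝ (fderiv ℝ φ) y)) y :=
    ((rieszCLM d).hasFDerivAt).comp y h2
  rw [grad_eq_riesz]
  refine ⟨?_, ?_⟩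
  · have : hess φ y = (rieszCLM d).comp (fderiv ℝ (fderiv ℝ φ) y) := by
      simpa [hess, grad_eq_riesz] using hc.fderiv
    rw [show hess φ y = _ from this]; exact hc
  · simpa [hess, grad_eq_riesz] using hc.fderiv

lemma hess_inner_symm {φ : E → ℝ} (hφ : ContDiff ℝ 2 φ) (y v w : E) :
    ⟪(hess φ y) v, w⟫ = ⟪(hess φ y) w, v⟫ := by
  have h2 : HasFDerivAt (fderiv ℝ φ) (fderiv ℝ (fderiv ℝ φ) y) y :=
    (((hφ.fderiv_right (m := 1) (by norm_num)).differentiable (by norm_num)) y).hasFDerivAt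
  have hsymm : fderiv ℝ (fderiv ℝ φ) y v w = fderiv ℝ (fderiv ℝ φ) y w v :=
    second_derivative_symmetric
      (fun z => ((hφ.differentiable (by norm_num)) z).hasFDerivAt) h2 v w
  rw [(hasFDerivAt_grad hφ y).2]
  simp only [ContinuousLinearMap.coe_comp', Function.comp_apply, inner_rieszCLM]
  exact hsymm

lemma aux1d (ψ ψ' ψ'' : ℝ → ℝ) (h : ∀ t, HasDerivAt ψ (ψ' t) t)
    (h' : ∀ t, HasDerivAt ψ' (ψ'' t) t) (h0 : ψ 0 = 0) (h0' : ψ' 0 = 0)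
    (hneg : ∀ t, ψ'' t ≤ 0) : ψ 1 ≤ 0 := by
  have hanti : Antitone ψ' :=
    antitone_of_deriv_nonpos (fun t => (h' t).differentiableAt)
      (fun t => by rw [(h' t).deriv]; exact hneg t)
  have hψanti : AntitoneOn ψ (Set.Ici 0) := by
    apply antitoneOn_of_deriv_nonpos (convex_Ici 0)
      (fun t _ => (h t).differentiableAt.continuousAt.continuousWithinAt)
      (fun t _ => (h t).differentiableAt.differentiableWithinAt)
    intro t ht
    rw [(h t).deriv]
    rw [interior_Ici] at ht
    have := hanti (le_of_lt ht)
    linarith [h0' ▸ this]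
  have := hψanti (Set.self_mem_Ici) (by norm_num : (1:ℝ) ∈ Set.Ici 0) zero_le_one
  linarith

lemma curve_deriv1 {φ : E → ℝ} (hφ : ContDiff ℝ 2 φ) (x v : E) (t : ℝ) :
    HasDerivAt (fun t : ℝ => φ (x + t • v)) ⟪gradient φ (x + t • v), v⟫ t := by
  have hc : HasDerivAt (fun t : ℝ => x + t • v) v t := by
    simpa using ((hasDerivAt_id t).smul_const v).const_add x
  have := (((hφ.differentiable (by norm_num)) (x + t • v)).hasFDerivAt).comp_hasDerivAt t hc
  rw [grad_inner]
  exact this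

lemma curve_deriv2 {φ : E → ℝ} (hφ : ContDiff ℝ 2 φ) (x v : E) (t : ℝ) :
    HasDerivAt (fun t : ℝ => ⟪gradient φ (x + t • v), v⟫)
      ⟪(hess φ (x + t • v)) v, v⟫ t := by
  have hc : HasDerivAt (fun t : ℝ => x + t • v) v t := by
    simpa using ((hasDerivAt_id t).smul_const v).const_add x
  have hg : HasDerivAt (fun t : ℝ => gradient φ (x + t • v)) ((hess φ (x + t • v)) v) t :=
    by have h := ((hasFDerivAt_grad hφ (x + t • v)).1).comp_hasDerivAt t hc; exact h
  have := hg.inner ℝ (hasDerivAt_const t v)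
  simpa using this

lemma taylor_upper_s7 {φ : E → ℝ} (hφ : ContDiff ℝ 2 φ) (C : ℝ)
    (hC : ∀ y v, ⟪(hess φ y) v, v⟫ ≤ C * ‖v‖ ^ 2) (x v : E) :
    φ (x + v) ≤ φ x + ⟪gradient φ x, v⟫ + C / 2 * ‖v‖ ^ 2 := by
  set g0 : ℝ := ⟪gradient φ x, v⟫ with hg0
  have key : (fun t : ℝ => φ (x + t • v) - (φ x + t * g0 + C / 2 * t ^ 2 * ‖v‖ ^ 2)) 1 ≤ 0 := by
    refine aux1d (fun t : ℝ => φ (x + t • v) - (φ x + t * g0 + C / 2 * t ^ 2 * ‖v‖ ^ 2))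
      (fun t : ℝ => ⟪gradient φ (x + t • v), v⟫ - (g0 + C * t * ‖v‖ ^ 2))
      (fun t : ℝ => ⟪(hess φ (x + t • v)) v, v⟫ - C * ‖v‖ ^ 2) ?_ ?_ ?_ ?_ ?_
    · intro t
      refine (curve_deriv1 hφ x v t).sub ?_
      have h1 : HasDerivAt (fun t : ℝ => t * g0) g0 t := hasDerivAt_mul_const g0
      have h2 : HasDerivAt (fun t : ℝ => C / 2 * t ^ 2 * ‖v‖ ^ 2) (C * t * ‖v‖ ^ 2) t := by
        have := ((hasDerivAt_pow 2 t).const_mul (C / 2)).mul_const (‖v‖ ^ 2)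
        exact this.congr_deriv (by norm_num only; ring)
      exact (h1.const_add (φ x)).add h2
    · intro t
      refine (curve_deriv2 hφ x v t).sub ?_
      have h2 : HasDerivAt (fun t : ℝ => C * t * ‖v‖ ^ 2) (C * ‖v‖ ^ 2) t := by
        simpa using ((hasDerivAt_id t).const_mul C).mul_const (‖v‖ ^ 2)
      simpa using h2.const_add g0
    · simp
    · simp [hg0]
    · intro t
      have := hC (x + t • v) v
      linarith
  have : φ (x + (1:ℝ) • v) - (φ x + 1 * g0 + C / 2 * 1 ^ 2 * ‖v‖ ^ 2) ≤ 0 := key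
  simp only [one_smul, one_mul, one_pow] at this
  linarith

lemma taylor_lower_s7 {φ : E → ℝ} (hφ : ContDiff ℝ 2 φ) (C : ℝ)
    (hC : ∀ y v, C * ‖v‖ ^ 2 ≤ ⟪(hess φ y) v, v⟫) (x v : E) :
    φ x + ⟪gradient φ x, v⟫ + C / 2 * ‖v‖ ^ 2 ≤ φ (x + v) := by
  set g0 : ℝ := ⟪gradient φ x, v⟫ with hg0
  have key : (fun t : ℝ => (φ x + t * g0 + C / 2 * t ^ 2 * ‖v‖ ^ 2) - φ (x + t • v)) 1 ≤ 0 := by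
    refine aux1d (fun t : ℝ => (φ x + t * g0 + C / 2 * t ^ 2 * ‖v‖ ^ 2) - φ (x + t • v))
      (fun t : ℝ => (g0 + C * t * ‖v‖ ^ 2) - ⟪gradient φ (x + t • v), v⟫)
      (fun t : ℝ => C * ‖v‖ ^ 2 - ⟪(hess φ (x + t • v)) v, v⟫) ?_ ?_ ?_ ?_ ?_
    · intro t
      refine HasDerivAt.sub ?_ (curve_deriv1 hφ x v t)
      have h1 : HasDerivAt (fun t : ℝ => t * g0) g0 t := hasDerivAt_mul_const g0
      have h2 : HasDerivAt (fun t : ℝ => C / 2 * t ^ 2 * ‖v‖ ^ 2) (C * t * ‖v‖ ^ 2) t := by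
        have := ((hasDerivAt_pow 2 t).const_mul (C / 2)).mul_const (‖v‖ ^ 2)
        exact this.congr_deriv (by norm_num only; ring)
      exact (h1.const_add (φ x)).add h2
    · intro t
      refine HasDerivAt.sub ?_ (curve_deriv2 hφ x v t)
      have h2 : HasDerivAt (fun t : ℝ => C * t * ‖v‖ ^ 2) (C * ‖v‖ ^ 2) t := by
        simpa using ((hasDerivAt_id t).const_mul C).mul_const (‖v‖ ^ 2)
      simpa using h2.const_add g0
    · simp
    · simp [hg0]
    · intro t
      have := hC (x + t • v) v
      linarith
  have : (φ x + 1 * g0 + C / 2 * 1 ^ 2 * ‖v‖ ^ 2) - φ (x + (1:ℝ) • v) ≤ 0 := key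
  simp only [one_smul, one_mul, one_pow] at this
  linarith


lemma inner_CS (A : E →L[ℝ] E) (hsym : ∀ v w, ⟪A v, w⟫ = ⟪A w, v⟫)
    (hpsd : ∀ v, 0 ≤ ⟪A v, v⟫) (u v : E) : ⟪A u, v⟫ ^ 2 ≤ ⟪A u, u⟫ * ⟪A v, v⟫ := by
  have key : ∀ t : ℝ, 0 ≤ ⟪A v, v⟫ * (t * t) + (2 * ⟪A u, v⟫) * t + ⟪A u, u⟫ := by
    intro t
    have h := hpsd (u + t • v)
    have expand : ⟪A (u + t • v), u + t • v⟫
        = ⟪A v, v⟫ * (t * t) + (2 * ⟪A u, v⟫) * t + ⟪A u, u⟫ := by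
      rw [map_add, map_smul]
      simp only [inner_add_left, inner_add_right, real_inner_smul_left, real_inner_smul_right]
      rw [hsym v u]
      ring
    rw [expand] at h
    exact h
  have hd := discrim_le_zero (a := ⟪A v, v⟫) (b := 2 * ⟪A u, v⟫) (c := ⟪A u, u⟫) key
  rw [discrim] at hd
  nlinarith [hd]

lemma core_ineq (A : E →L[ℝ] E) (g p : E) (m M θ : ℝ) (hm : 0 < m) (hM : 0 < M)
    (hsym : ∀ v w, ⟪A v, w⟫ = ⟪A w, v⟫)
    (hlow : ∀ v, m * ‖v‖ ^ 2 ≤ ⟪A v, v⟫) (hup : ∀ v, ⟪A v, v⟫ ≤ M * ‖v‖ ^ 2)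
    (hθ0 : 0 ≤ θ) (hθ : θ ≤ 1 / 2 * Real.sqrt (m / M))
    (hr : ‖A p + g‖ ≤ θ * ‖g‖) :
    ⟪p, g⟫ ≤ -‖g‖ ^ 2 / (2 * M) := by
  have hpsd : ∀ v, 0 ≤ ⟪A v, v⟫ := fun v => le_trans (by positivity) (hlow v)
  have hinj : Function.Injective A := by
    intro a b hab
    have hz : A (a - b) = 0 := by rw [map_sub, hab, sub_self]
    have h1 := hlow (a - b)
    rw [hz, inner_zero_left] at h1
    have h2 : ‖a - b‖ ^ 2 ≤ 0 := by nlinarith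
    have h3 : ‖a - b‖ ^ 2 = 0 := le_antisymm h2 (sq_nonneg _)
    exact sub_eq_zero.mp (norm_eq_zero.mp (sq_eq_zero_iff.mp h3))
  have hsurj : Function.Surjective A := by
    have h := (LinearMap.injective_iff_surjective
      (f := (A.toLinearMap : EuclideanSpace ℝ (Fin d) →ₗ[ℝ] EuclideanSpace ℝ (Fin d)))).mp
    exact h hinj
  obtain ⟨z, hz⟩ := hsurj g
  set q : ℝ := ⟪A z, z⟫ with hq
  have hq0 : 0 ≤ q := hpsd z
  have hqm : m * ‖z‖ ^ 2 ≤ q := hlow z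
  -- ‖g‖² ≤ q M
  have hCS := inner_CS A hsym hpsd z g
  have hAzg : ⟪A z, g⟫ = ‖g‖ ^ 2 := by rw [hz]; exact real_inner_self_eq_norm_sq g
  rw [hAzg] at hCS
  have hAg := hup g
  have hw2 : ‖g‖ ^ 2 ≤ q * M := by
    by_cases hg0 : ‖g‖ = 0
    · rw [hg0]
      simpa using mul_nonneg hq0 hM.le
    · have hgpos : 0 < ‖g‖ ^ 2 := by positivity
      have h5 : ⟪A z, z⟫ * ⟪A g, g⟫ ≤ q * (M * ‖g‖ ^ 2) := by
        exact mul_le_mul_of_nonneg_left hAg hq0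
      nlinarith [hCS, h5, hgpos]
  -- split of ⟪p, g⟫
  have hsplit : ⟪p, g⟫ = ⟪A p + g, z⟫ - ⟪g, z⟫ := by
    have h1 : ⟪p, g⟫ = ⟪A p, z⟫ := by
      calc ⟪p, g⟫ = ⟪p, A z⟫ := by rw [hz]
      _ = ⟪A z, p⟫ := real_inner_comm _ _
      _ = ⟪A p, z⟫ := hsym z p
    rw [inner_add_left, h1]
    ring
  have hgzq : ⟪g, z⟫ = q := by rw [← hz, hq]
  have hrz : ⟪A p + g, z⟫ ≤ θ * ‖g‖ * ‖z‖ := by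
    calc ⟪A p + g, z⟫ ≤ ‖A p + g‖ * ‖z‖ := real_inner_le_norm _ _
    _ ≤ θ * ‖g‖ * ‖z‖ := by
        apply mul_le_mul_of_nonneg_right hr (norm_nonneg z)
  -- numerics
  set σ : ℝ := Real.sqrt (m / M) with hσ
  have hσ0 : 0 ≤ σ := Real.sqrt_nonneg _
  have hσ2 : σ ^ 2 = m / M := Real.sq_sqrt (by positivity)
  have hu2 : (σ * ‖z‖) ^ 2 ≤ q / M := by
    have : (σ * ‖z‖) ^ 2 = (m / M) * ‖z‖ ^ 2 := by rw [mul_pow, hσ2]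
    rw [this]
    rw [div_mul_eq_mul_div, div_le_div_iff₀ hM hM]
    nlinarith [hqm]
  have huw : ‖g‖ * (σ * ‖z‖) ≤ q := by
    have hsq : (‖g‖ * (σ * ‖z‖)) ^ 2 ≤ q ^ 2 := by
      have h1 : (‖g‖ * (σ * ‖z‖)) ^ 2 = ‖g‖ ^ 2 * (σ * ‖z‖) ^ 2 := by ring
      rw [h1]
      calc ‖g‖ ^ 2 * (σ * ‖z‖) ^ 2 ≤ (q * M) * (q / M) := by
            apply mul_le_mul hw2 hu2 (sq_nonneg _) (by positivity)
      _ = q ^ 2 := by field_simp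
    nlinarith [mul_nonneg (norm_nonneg g) (mul_nonneg hσ0 (norm_nonneg z)), hq0]
  have hθw : θ * ‖g‖ * ‖z‖ ≤ q / 2 := by
    have h1 : θ * ‖g‖ * ‖z‖ ≤ (1 / 2 * σ) * ‖g‖ * ‖z‖ := by
      apply mul_le_mul_of_nonneg_right _ (norm_nonneg z)
      exact mul_le_mul_of_nonneg_right hθ (norm_nonneg g)
    have h2 : (1 / 2 * σ) * ‖g‖ * ‖z‖ = (‖g‖ * (σ * ‖z‖)) / 2 := by ring
    linarith [h1, h2 ▸ h1, huw]
  have hg2M : ‖g‖ ^ 2 / (2 * M) ≤ q / 2 := by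
    rw [div_le_div_iff₀ (by positivity) (by norm_num)]
    nlinarith [hw2]
  rw [hsplit, hgzq]
  have : θ * ‖g‖ * ‖z‖ - q ≤ -(‖g‖ ^ 2 / (2 * M)) := by linarith
  calc ⟪A p + g, z⟫ - q ≤ θ * ‖g‖ * ‖z‖ - q := by linarith [hrz]
  _ ≤ -(‖g‖ ^ 2 / (2 * M)) := this
  _ = -‖g‖ ^ 2 / (2 * M) := by ring

lemma sum_le_top {n : ℕ} (K : Fin n → ℝ) (Q T : Finset (Fin n)) (hcard : T.card = Q.card)
    (htop : ∀ i ∈ Q, ∀ j ∉ Q, K j ≤ K i) : ∑ i ∈ T, K i ≤ ∑ i ∈ Q, K i := by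
  have hd : (T \ Q).card = (Q \ T).card := by
    have h1 := Finset.card_sdiff_add_card_inter T Q
    have h2 := Finset.card_sdiff_add_card_inter Q T
    rw [Finset.inter_comm] at h2
    omega
  have key : ∑ i ∈ T \ Q, K i ≤ ∑ i ∈ Q \ T, K i := by
    let e := Finset.equivOfCardEq hd
    rw [← Finset.sum_coe_sort (T \ Q), ← Finset.sum_coe_sort (Q \ T)]
    rw [← Equiv.sum_comp e (fun y : ((Q \ T : Finset (Fin n)) : Type) => K y)]
    apply Finset.sum_le_sum
    intro x _
    exact htop (e x) (Finset.mem_sdiff.mp (e x).2).1 x (Finset.mem_sdiff.mp x.2).2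
  have h1 := Finset.sum_inter_add_sum_sdiff T Q K
  have h2 := Finset.sum_inter_add_sum_sdiff Q T K
  rw [Finset.inter_comm] at h2
  linarith

end Aux

theorem stmt_7 {d n s : ℕ} (hn : 0 < n) (hs : 0 < s)
    (f : Fin n → EuclideanSpace ℝ (Fin d) → ℝ) (K : Fin n → ℝ)
    (F : EuclideanSpace ℝ (Fin d) → ℝ)
    (γ Kc Khats β ε θ₁ θ₂ lam : ℝ) (x xstar p : EuclideanSpace ℝ (Fin d))
    (S : Fin s → Fin n)
    -- each fᵢ is twice continuously differentiable, convex, with `∇²fᵢ ⪯ Kᵢ I`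
    (hf : ∀ i, ContDiff ℝ 2 (f i))
    (hKpos : ∀ i, 0 < K i)
    (hfpsd : ∀ i y v, 0 ≤ ⟪(hess (f i) y) v, v⟫)
    (hfK : ∀ i y v, ⟪(hess (f i) y) v, v⟫ ≤ K i * ‖v‖ ^ 2)
    -- `F = (1/n) ∑ fᵢ`
    (hF : ∀ y, F y = (1 / n : ℝ) * ∑ i, f i y)
    -- `γ I ⪯ ∇²F ⪯ K I` with `0 < γ ≤ K`
    (hγ : 0 < γ) (hγK : γ ≤ Kc)
    (hFlow : ∀ y v, γ * ‖v‖ ^ 2 ≤ ⟪(hess F y) v, v⟫)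
    (hFup : ∀ y v, ⟪(hess F y) v, v⟫ ≤ Kc * ‖v‖ ^ 2)
    -- `xstar` is the (unique) minimizer of `F`
    (hmin : ∀ y, F xstar ≤ F y)
    -- `K̂_s` is the average of the `s` largest `Kᵢ`'s
    (hKhats : ∃ Q : Finset (Fin n), Q.card = s ∧
        (∀ i ∈ Q, ∀ j ∉ Q, K j ≤ K i) ∧ Khats = (∑ i ∈ Q, K i) / s)
    (hβ : 0 < β) (hβ1 : β < 1) (hε : 0 < ε) (hε1 : ε < 1)
    (hθ₂0 : 0 < θ₂) (hθ₂1 : θ₂ < 1) (hlam : 0 ≤ lam)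
    -- the sample consists of distinct indices
    (hSinj : Function.Injective S)
    -- `λ_min(H) ≥ (1-ε)γ` for the sub-sampled Hessian `H = H(x)`
    (hH : ∀ v, (1 - ε) * γ * ‖v‖ ^ 2 ≤
        ⟪((s : ℝ)⁻¹ • ∑ j, hess (f (S j)) x) v, v⟫)
    -- `0 ≤ θ₁ ≤ (1/2)√(((1-ε)γ+λ)/(K̂_s+λ))`
    (hθ₁0 : 0 ≤ θ₁)
    (hθ₁le : θ₁ ≤ (1 / 2) * Real.sqrt (((1 - ε) * γ + lam) / (Khats + lam)))
    -- inexactness conditions on the update direction `p`, w.r.t. `Ĥ = H + λ I`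
    (hp₁ : ‖(ridgeHess f S lam x) p + gradient F x‖ ≤ θ₁ * ‖gradient F x‖)
    (hp₂ : ⟪p, gradient F x⟫ ≤ -(1 - θ₂) * ⟪p, (ridgeHess f S lam x) p⟫) :
    -- any `α > 0` satisfying the Armijo condition yields the stated linear rate
    (∀ α : ℝ, 0 < α → F (x + α • p) ≤ F x + α * β * ⟪p, gradient F x⟫ →
        F (x + α • p) - F xstar ≤
          (1 - α * β * γ / (Khats + lam)) * (F x - F xstar)) ∧
    -- and any `0 < α ≤ 2(1-θ₂)(1-β)((1-ε)γ+λ)/K` satisfies the Armijo condition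
    (∀ α : ℝ, 0 < α → α ≤ 2 * (1 - θ₂) * (1 - β) * ((1 - ε) * γ + lam) / Kc →
        F (x + α • p) ≤ F x + α * β * ⟪p, gradient F x⟫) := by
  obtain ⟨Q, hQcard, hQtop, hKdef⟩ := hKhats
  set g : EuclideanSpace ℝ (Fin d) := gradient F x with hgdef
  set m : ℝ := (1 - ε) * γ + lam with hmdef
  set M : ℝ := Khats + lam with hMdef
  set A : EuclideanSpace ℝ (Fin d) →L[ℝ] EuclideanSpace ℝ (Fin d) :=
    ridgeHess f S lam x with hAdef
  have hKc : 0 < Kc := lt_of_lt_of_le hγ hγK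
  -- F is C²
  have hFeq : F = fun y => (1 / n : ℝ) * ∑ i, f i y := funext hF
  have hFc : ContDiff ℝ 2 F := by
    rw [hFeq]
    exact contDiff_const.mul (ContDiff.sum fun i _ => hf i)
  -- positivity facts
  have hQne : Q.Nonempty := Finset.card_pos.mp (by rw [hQcard]; exact hs)
  have hspos : (0:ℝ) < (s:ℝ) := by exact_mod_cast hs
  have hKhats_pos : 0 < Khats := by
    rw [hKdef]
    exact div_pos (Finset.sum_pos (fun i _ => hKpos i) hQne) hspos
  have hmpos : 0 < m := by
    rw [hmdef]
    have h1 : 0 < (1 - ε) * γ := mul_pos (by linarith) hγ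
    linarith
  have hMpos : 0 < M := by rw [hMdef]; linarith
  -- Ĥ application
  have hAapply : ∀ v, A v = ((s : ℝ)⁻¹ • ∑ j, hess (f (S j)) x) v + lam • v := by
    intro v
    rw [hAdef]
    simp [ridgeHess]
  -- lower bound on Ĥ
  have hAlow : ∀ v, m * ‖v‖ ^ 2 ≤ ⟪A v, v⟫ := by
    intro v
    rw [hAapply, inner_add_left, real_inner_smul_left, real_inner_self_eq_norm_sq]
    have h1 := hH v
    have h2 : m * ‖v‖ ^ 2 = (1 - ε) * γ * ‖v‖ ^ 2 + lam * ‖v‖ ^ 2 := by rw [hmdef]; ring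
    linarith
  -- upper bound on H
  have hHup : ∀ v : EuclideanSpace ℝ (Fin d),
      ⟪(((s : ℝ)⁻¹ • ∑ j, hess (f (S j)) x :
        EuclideanSpace ℝ (Fin d) →L[ℝ] EuclideanSpace ℝ (Fin d))) v, v⟫
        ≤ Khats * ‖v‖ ^ 2 := by
    intro v
    have hrw : ⟪(((s : ℝ)⁻¹ • ∑ j, hess (f (S j)) x :
        EuclideanSpace ℝ (Fin d) →L[ℝ] EuclideanSpace ℝ (Fin d))) v, v⟫
        = (s : ℝ)⁻¹ * ∑ j, ⟪(hess (f (S j)) x) v, v⟫ := by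
      rw [ContinuousLinearMap.smul_apply, real_inner_smul_left,
        ContinuousLinearMap.sum_apply, sum_inner]
    rw [hrw]
    have hsum : ∑ j, ⟪(hess (f (S j)) x) v, v⟫ ≤ ∑ j, K (S j) * ‖v‖ ^ 2 :=
      Finset.sum_le_sum fun j _ => hfK (S j) x v
    have himg : ∑ i ∈ Finset.univ.image S, K i = ∑ j, K (S j) :=
      Finset.sum_image (fun a _ b _ h => hSinj h)
    have hcard : (Finset.univ.image S).card = Q.card := by
      rw [Finset.card_image_of_injective _ hSinj, hQcard, Finset.card_univ, Fintype.card_fin]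
    have hle : ∑ j, K (S j) ≤ ∑ i ∈ Q, K i := by
      rw [← himg]
      exact sum_le_top K Q _ hcard hQtop
    have h3 : ∑ j, K (S j) * ‖v‖ ^ 2 = (∑ j, K (S j)) * ‖v‖ ^ 2 := by
      rw [Finset.sum_mul]
    have h4 : (∑ j, K (S j)) * ‖v‖ ^ 2 ≤ (∑ i ∈ Q, K i) * ‖v‖ ^ 2 :=
      mul_le_mul_of_nonneg_right hle (sq_nonneg _)
    have h5 : (s : ℝ)⁻¹ * ((∑ i ∈ Q, K i) * ‖v‖ ^ 2) = Khats * ‖v‖ ^ 2 := by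
      rw [hKdef]; field_simp
    calc (s : ℝ)⁻¹ * ∑ j, ⟪(hess (f (S j)) x) v, v⟫
        ≤ (s : ℝ)⁻¹ * ((∑ i ∈ Q, K i) * ‖v‖ ^ 2) := by
          apply mul_le_mul_of_nonneg_left _ (by positivity)
          linarith
    _ = Khats * ‖v‖ ^ 2 := h5
  -- upper bound on Ĥ
  have hAup : ∀ v, ⟪A v, v⟫ ≤ M * ‖v‖ ^ 2 := by
    intro v
    rw [hAapply, inner_add_left, real_inner_smul_left, real_inner_self_eq_norm_sq]
    have h1 := hHup v
    have h2 : M * ‖v‖ ^ 2 = Khats * ‖v‖ ^ 2 + lam * ‖v‖ ^ 2 := by rw [hMdef]; ring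
    linarith
  -- symmetry of Ĥ
  have hAsym : ∀ v w, ⟪A v, w⟫ = ⟪A w, v⟫ := by
    intro v w
    rw [hAapply v, hAapply w, inner_add_left, inner_add_left,
      real_inner_smul_left, real_inner_smul_left]
    have h1 : ∀ u₁ u₂ : EuclideanSpace ℝ (Fin d),
        ⟪(((s : ℝ)⁻¹ • ∑ j, hess (f (S j)) x :
          EuclideanSpace ℝ (Fin d) →L[ℝ] EuclideanSpace ℝ (Fin d))) u₁, u₂⟫
        = (s : ℝ)⁻¹ * ∑ j, ⟪(hess (f (S j)) x) u₁, u₂⟫ := by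
      intro u₁ u₂
      rw [ContinuousLinearMap.smul_apply, real_inner_smul_left,
        ContinuousLinearMap.sum_apply, sum_inner]
    rw [h1, h1]
    have h2 : ∑ j, ⟪(hess (f (S j)) x) v, w⟫ = ∑ j, ⟪(hess (f (S j)) x) w, v⟫ :=
      Finset.sum_congr rfl fun j _ => hess_inner_symm (hf (S j)) x v w
    rw [h2, real_inner_comm v w]
  -- core inequality
  have hcore : ⟪p, g⟫ ≤ -‖g‖ ^ 2 / (2 * M) :=
    core_ineq A g p m M θ₁ hmpos hMpos hAsym hAlow hAup hθ₁0 hθ₁le hp₁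
  -- PL inequality
  have hPL : F x - F xstar ≤ ‖g‖ ^ 2 / (2 * γ) := by
    have ht := taylor_lower_s7 hFc γ hFlow x (xstar - x)
    have hxx : x + (xstar - x) = xstar := by abel
    rw [hxx] at ht
    have hi := abs_real_inner_le_norm g (xstar - x)
    rw [le_div_iff₀ (by positivity : (0:ℝ) < 2 * γ)]
    nlinarith [ht, hi, sq_nonneg (‖g‖ - γ * ‖xstar - x‖), neg_abs_le ⟪g, xstar - x⟫,
      norm_nonneg (xstar - x), norm_nonneg g]
  constructor
  · intro α hα harm
    have hαβ : 0 < α * β := mul_pos hα hβ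
    have h1 : α * β * ⟪p, g⟫ ≤ α * β * (-‖g‖ ^ 2 / (2 * M)) :=
      mul_le_mul_of_nonneg_left hcore hαβ.le
    have hcoef : 0 < α * β * γ / M := by positivity
    have h2 : α * β * γ / M * (F x - F xstar) ≤ α * β * γ / M * (‖g‖ ^ 2 / (2 * γ)) :=
      mul_le_mul_of_nonneg_left hPL hcoef.le
    have h3 : α * β * γ / M * (‖g‖ ^ 2 / (2 * γ)) = α * β * (‖g‖ ^ 2 / (2 * M)) := by
      field_simp
    have hgoal : (1 - α * β * γ / M) * (F x - F xstar)
        = (F x - F xstar) - α * β * γ / M * (F x - F xstar) := by ring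
    rw [hgoal]
    have h4 : α * β * (-‖g‖ ^ 2 / (2 * M)) = -(α * β * (‖g‖ ^ 2 / (2 * M))) := by ring
    linarith [harm, h1, h2, h3 ▸ h2]
  · intro α hα hαle
    have ht := taylor_upper_s7 hFc Kc hFup x (α • p)
    have hip : ⟪g, α • p⟫ = α * ⟪p, g⟫ := by
      rw [real_inner_smul_right, real_inner_comm]
    have hnp : ‖α • p‖ ^ 2 = α ^ 2 * ‖p‖ ^ 2 := by
      rw [norm_smul, mul_pow, Real.norm_eq_abs, sq_abs]
    rw [hip, hnp] at ht
    -- ⟪p, g⟫ ≤ -(1-θ₂) m ‖p‖²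
    have hApp : m * ‖p‖ ^ 2 ≤ ⟪p, A p⟫ := by
      rw [real_inner_comm]
      exact hAlow p
    have hpg : ⟪p, g⟫ ≤ -(1 - θ₂) * (m * ‖p‖ ^ 2) := by
      have := hp₂
      nlinarith [hApp, hθ₂1]
    have hα2 : α * Kc ≤ 2 * (1 - θ₂) * (1 - β) * m := (le_div_iff₀ hKc).mp hαle
    have hfin : α * ⟪p, g⟫ + Kc / 2 * (α ^ 2 * ‖p‖ ^ 2) ≤ α * β * ⟪p, g⟫ := by
      have h1 : α * (1 - β) * ((1 - θ₂) * (m * ‖p‖ ^ 2)) ≤ α * (1 - β) * (-⟪p, g⟫) := by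
        apply mul_le_mul_of_nonneg_left (by linarith) (by nlinarith)
      have h2 : (α * Kc) * (α * ‖p‖ ^ 2) ≤ (2 * (1 - θ₂) * (1 - β) * m) * (α * ‖p‖ ^ 2) :=
        mul_le_mul_of_nonneg_right hα2 (by positivity)
      nlinarith [h1, h2]
    linarith [ht, hfin]
end
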